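/- Let G = (V, E) be a finite multigraph and let z ∈ ℝ^E_{≥0} satisfy z(δ(v)) = 2 for all v ∈ V and z(δ(S)) ≥ 2 for all nonempty proper subsets S ⊊ V, and suppose e₀ ∈ E has z(e₀) ≥ 1. Then z - χ^{e₀} satisfies the spanning tree polytope constraints: (z - χ^{e₀})(E) = |V| - 1 and (z - χ^{e₀})(E[S]) ≤ |S| - 1 for all S ⊆ V, and z - χ^{e₀} ≥ 0. -/

import Mathlib

theorem heldKarp_minus_edge_in_spanningTree_polytope
    {V E : Type*} [Fintype V] [DecidableEq V] [Fintype E] [DecidableEq E]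
    (ep1 ep2 : E → V) (hloopfree : ∀ e, ep1 e ≠ ep2 e)
    (z : E → ℝ) (hz : ∀ e, 0 ≤ z e)
    (hdeg : ∀ v : V,
      ∑ e ∈ Finset.univ.filter (fun e => Xor (ep1 e = v) (ep2 e = v)), z e = 2)
    (hcut : ∀ S : Finset V, S.Nonempty → S ≠ Finset.univ →
      2 ≤ ∑ e ∈ Finset.univ.filter (fun e => Xor (ep1 e ∈ S) (ep2 e ∈ S)), z e)
    (e₀ : E) (he₀ : 1 ≤ z e₀) :
    (∑ e, (z e - if e = e₀ then 1 else 0) = (Fintype.card V : ℝ) - 1) ∧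
    (∀ S : Finset V, S.Nonempty →
      ∑ e ∈ Finset.univ.filter (fun e => ep1 e ∈ S ∧ ep2 e ∈ S),
          (z e - if e = e₀ then 1 else 0) ≤ (S.card : ℝ) - 1) ∧
    (∀ e, 0 ≤ z e - if e = e₀ then 1 else 0) := by
  classical
  have key : ∀ S : Finset V,
      ∑ v ∈ S, ∑ e ∈ Finset.univ.filter (fun e => Xor (ep1 e = v) (ep2 e = v)), z e
      = 2 * (∑ e ∈ Finset.univ.filter (fun e => ep1 e ∈ S ∧ ep2 e ∈ S), z e)
        + ∑ e ∈ Finset.univ.filter (fun e => Xor (ep1 e ∈ S) (ep2 e ∈ S)), z e := by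
    intro S
    simp_rw [Finset.sum_filter]
    rw [Finset.sum_comm, Finset.mul_sum, ← Finset.sum_add_distrib]
    refine Finset.sum_congr rfl fun e _ => ?_
    have hne := hloopfree e
    have hsplit : ∀ v ∈ S, (if Xor (ep1 e = v) (ep2 e = v) then z e else 0)
        = (if ep1 e = v then z e else 0) + (if ep2 e = v then z e else 0) := by
      intro v _
      by_cases hv1 : ep1 e = v <;> by_cases hv2 : ep2 e = v <;>
        simp [Xor, hv1, hv2]
      exact absurd (hv1.trans hv2.symm) hne
    rw [Finset.sum_congr rfl hsplit, Finset.sum_add_distrib,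
      Finset.sum_ite_eq, Finset.sum_ite_eq]
    by_cases h1 : ep1 e ∈ S <;> by_cases h2 : ep2 e ∈ S <;>
      simp [Xor, h1, h2] <;> ring
  have hsumE : ∑ e, z e = (Fintype.card V : ℝ) := by
    have h := key Finset.univ
    rw [Finset.sum_congr rfl (fun v _ => hdeg v)] at h
    simp [Xor, Finset.card_univ, mul_comm] at h
    linarith
  have hchi : ∑ e, (if e = e₀ then (1:ℝ) else 0) = 1 := by
    simp
  refine ⟨?_, ?_, ?_⟩
  · rw [Finset.sum_sub_distrib, hsumE, hchi]
  · intro S hS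
    by_cases hSU : S = Finset.univ
    · subst hSU
      have hfilt : (Finset.univ.filter (fun e : E => ep1 e ∈ Finset.univ ∧ ep2 e ∈ Finset.univ))
          = Finset.univ := by simp
      rw [hfilt, Finset.sum_sub_distrib, hsumE, hchi, Finset.card_univ]
    · have h := key S
      have hc := hcut S hS hSU
      have hdegS : ∑ v ∈ S, ∑ e ∈ Finset.univ.filter
          (fun e => Xor (ep1 e = v) (ep2 e = v)), z e = 2 * S.card := by
        rw [Finset.sum_congr rfl (fun v _ => hdeg v)]
        simp [mul_comm]
      have hin : ∑ e ∈ Finset.univ.filter (fun e => ep1 e ∈ S ∧ ep2 e ∈ S), z e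
          ≤ (S.card : ℝ) - 1 := by
        rw [hdegS] at h
        linarith
      have hnn : 0 ≤ ∑ e ∈ Finset.univ.filter (fun e => ep1 e ∈ S ∧ ep2 e ∈ S),
          (if e = e₀ then (1:ℝ) else 0) :=
        Finset.sum_nonneg fun e _ => by positivity
      rw [Finset.sum_sub_distrib]
      linarith
  · intro e
    by_cases h : e = e₀
    · subst h; simp; linarith
    · simp [h, hz e]
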